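/- Let k be a positive integer, a a real number, and σ, τ > 0. Define g(t) = f_k(σ, e^{at}τ), where f_k(σ,τ) = (k(k+1)(σ+1)³(τ+1)² + 6στ)/(2στ). Then for all t ∈ ℝ, g''(t) = a²k(k+1)(σ+1)³ e^{−at}(τ² e^{2at} + 1)/(2στ). In particular g is strictly convex whenever a ≠ 0. -/

import Mathlib

/-- Second derivative of the trace of αᵏγ⁻¹ on the unipotent locus along the
eruption-flow direction (scaling τ by e^{at}), and strict convexity for a ≠ 0. -/
theorem trace_alpha_pow_k_second_deriv_eruption
    (k : ℕ) (hk : 0 < k) (a σ τ : ℝ) (hσ : 0 < σ) (hτ : 0 < τ)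
    (g : ℝ → ℝ)
    (hg : ∀ t, g t = ((k : ℝ) * ((k : ℝ) + 1) * (σ+1)^3 * (Real.exp (a*t) * τ + 1)^2
        + 6 * σ * (Real.exp (a*t) * τ)) / (2 * σ * (Real.exp (a*t) * τ))) :
    (∀ t : ℝ, deriv (deriv g) t =
      a^2 * (k : ℝ) * ((k : ℝ) + 1) * (σ+1)^3 * Real.exp (-(a*t))
        * (τ^2 * Real.exp (2*a*t) + 1) / (2*σ*τ)) ∧
    (a ≠ 0 → StrictConvexOn ℝ Set.univ g) := by
  have hk' : (0:ℝ) < (k:ℝ) := by exact_mod_cast hk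
  set C : ℝ := (k : ℝ) * ((k : ℝ) + 1) * (σ+1)^3 with hCdef
  have hC : 0 < C := by rw [hCdef]; positivity
  have hgeq : g = fun t => C*τ/(2*σ) * Real.exp (a*t)
      + C/(2*σ*τ) * Real.exp (-(a*t)) + (C/σ + 3) := by
    funext t
    rw [hg]
    have he : Real.exp (a*t) ≠ 0 := (Real.exp_pos _).ne'
    rw [Real.exp_neg]
    field_simp
    ring
  have h1 : ∀ t : ℝ, HasDerivAt (fun t => Real.exp (a*t)) (a * Real.exp (a*t)) t := by
    intro t
    have := (Real.hasDerivAt_exp (a*t)).comp t ((hasDerivAt_id t).const_mul a)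
    simpa [mul_comm, Function.comp_def] using this
  have h2 : ∀ t : ℝ, HasDerivAt (fun t => Real.exp (-(a*t))) (-a * Real.exp (-(a*t))) t := by
    intro t
    have := (Real.hasDerivAt_exp (-(a*t))).comp t (((hasDerivAt_id t).const_mul a).neg)
    simpa [mul_comm, Function.comp_def] using this
  have hd1 : ∀ t : ℝ, HasDerivAt g
      (C*τ/(2*σ) * (a * Real.exp (a*t)) + C/(2*σ*τ) * (-a * Real.exp (-(a*t)))) t := by
    intro t
    rw [hgeq]
    exact (((h1 t).const_mul (C*τ/(2*σ))).add ((h2 t).const_mul (C/(2*σ*τ)))).add_const _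
  have hderiv : deriv g = fun t =>
      C*τ/(2*σ) * (a * Real.exp (a*t)) + C/(2*σ*τ) * (-a * Real.exp (-(a*t))) := by
    funext t; exact (hd1 t).deriv
  have hd2 : ∀ t : ℝ, HasDerivAt (deriv g)
      (C*τ/(2*σ) * (a * (a * Real.exp (a*t))) + C/(2*σ*τ) * (-a * (-a * Real.exp (-(a*t))))) t := by
    intro t
    rw [hderiv]
    exact (((h1 t).const_mul a).const_mul (C*τ/(2*σ))).add
      (((h2 t).const_mul (-a)).const_mul (C/(2*σ*τ)))
  have key : ∀ t : ℝ, deriv (deriv g) t =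
      a^2 * (k : ℝ) * ((k : ℝ) + 1) * (σ+1)^3 * Real.exp (-(a*t))
        * (τ^2 * Real.exp (2*a*t) + 1) / (2*σ*τ) := by
    intro t
    rw [(hd2 t).deriv]
    have he : Real.exp (a*t) ≠ 0 := (Real.exp_pos _).ne'
    rw [Real.exp_neg, show (2:ℝ)*a*t = a*t + a*t by ring, Real.exp_add]
    field_simp
    ring
  refine ⟨key, fun ha => ?_⟩
  have ha2 : 0 < a^2 := by positivity
  refine strictConvexOn_of_deriv2_pos convex_univ ?_ ?_
  · rw [hgeq]; fun_prop
  · intro x _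
    have h2' : deriv^[2] g x = deriv (deriv g) x := by
      simp [Function.iterate_succ, Function.comp]
    rw [h2', key x]
    positivity
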